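/- Let ∇ be a normal lattice polytope with lattice points m₁,…,m_k, and for s ∈ S(∇)_r define the relation ∼_s on {m ∈ ∇∩ℤ^d : (m,1) divides s in S(∇)} as the transitive closure of: m ∼*_s m' iff m = m' or (m + m', 2) divides s. Then the toric ideal I(∇) is generated by its elements of degree at most r if and only if for every r' > r and every s ∈ S(∇)_{r'}, the relation ∼_s has exactly one equivalence class. -/

import Mathlib

open BigOperators Pointwise

/-- The toric ideal associated to a family of lattice points `m : ι → M`. -/
noncomputable def toricIdeal {ι M : Type} [AddCommMonoid M] (m : ι → M) :
    Ideal (MvPolynomial ι ℂ) :=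
  RingHom.ker (MvPolynomial.aeval
    (fun i => (AddMonoidAlgebra.single ((m i, 1) : M × ℤ) (1 : ℂ) :
      AddMonoidAlgebra ℂ (M × ℤ)))).toRingHom

/-- An ideal of a polynomial ring is generated in degree at most `r`. -/
def GeneratedInDegreeLE {ι : Type} (I : Ideal (MvPolynomial ι ℂ)) (r : ℕ) : Prop :=
  I = Ideal.span {p : MvPolynomial ι ℂ | p ∈ I ∧ p.totalDegree ≤ r}

noncomputable def phi {d k : ℕ} (m : Fin k → Fin d → ℤ) :
    MvPolynomial (Fin k) ℂ →+* AddMonoidAlgebra ℂ ((Fin d → ℤ) × ℤ) :=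
  (MvPolynomial.aeval
    (fun i => (AddMonoidAlgebra.single ((m i, 1) : (Fin d → ℤ) × ℤ) (1 : ℂ) :
      AddMonoidAlgebra ℂ ((Fin d → ℤ) × ℤ)))).toRingHom

def Avec {d k : ℕ} (m : Fin k → Fin d → ℤ) (u : Fin k →₀ ℕ) : (Fin d → ℤ) × ℤ :=
  u.sum fun t n => n • (m t, 1)

theorem phi_monomial {d k : ℕ} (m : Fin k → Fin d → ℤ) (u : Fin k →₀ ℕ) (c : ℂ) :
    phi m (MvPolynomial.monomial u c) = AddMonoidAlgebra.single (Avec m u) c := by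
  simp only [phi]
  rw [show ((MvPolynomial.aeval fun i => AddMonoidAlgebra.single ((m i, 1) : (Fin d → ℤ) × ℤ) (1:ℂ)).toRingHom ((MvPolynomial.monomial u) c)) = (MvPolynomial.aeval fun i => AddMonoidAlgebra.single ((m i, 1) : (Fin d → ℤ) × ℤ) (1:ℂ)) ((MvPolynomial.monomial u) c) from rfl, MvPolynomial.aeval_monomial]
  have : (u.prod fun t n =>
      (AddMonoidAlgebra.single ((m t, 1) : (Fin d → ℤ) × ℤ) (1:ℂ)) ^ n) =
      AddMonoidAlgebra.single (Avec m u) 1 := by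
    rw [Finsupp.prod, Avec, Finsupp.sum]
    simp only [AddMonoidAlgebra.single_pow, one_pow]
    rw [AddMonoidAlgebra.prod_single]
    simp
  rw [this, AddMonoidAlgebra.coe_algebraMap]
  simp only [Function.comp]
  rw [AddMonoidAlgebra.single_mul_single]
  simp

theorem toricIdeal_eq_ker {d k : ℕ} (m : Fin k → Fin d → ℤ) : toricIdeal m = RingHom.ker (phi m) := rfl


theorem phi_apply_eq (d k : ℕ) (m : Fin k → Fin d → ℤ) (p : MvPolynomial (Fin k) ℂ)
    (g : (Fin d → ℤ) × ℤ) :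
    (phi m p).coeff g = ∑ v ∈ p.support, (if Avec m v = g then MvPolynomial.coeff v p else 0) := by
  conv_lhs => rw [p.as_sum, map_sum]
  rw [AddMonoidAlgebra.coeff_sum, Finsupp.finset_sum_apply]
  refine Finset.sum_congr rfl fun v hv => ?_
  rw [phi_monomial, AddMonoidAlgebra.coeff_single, Finsupp.single_apply]

theorem ker_fiber_sum {d k : ℕ} {m : Fin k → Fin d → ℤ} {p : MvPolynomial (Fin k) ℂ}
    (hp : p ∈ toricIdeal m) (g : (Fin d → ℤ) × ℤ) :
    ∑ v ∈ p.support, (if Avec m v = g then MvPolynomial.coeff v p else 0) = 0 := by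
  rw [← phi_apply_eq]
  have : phi m p = 0 := hp
  rw [this]; rfl

section helpers
variable {d k : ℕ} (m : Fin k → Fin d → ℤ)

theorem Avec_zero : Avec m 0 = 0 := Finsupp.sum_zero_index

theorem Avec_add (u v : Fin k →₀ ℕ) : Avec m (u + v) = Avec m u + Avec m v :=
  Finsupp.sum_add_index' (fun t => zero_smul ℕ _) (fun t n n' => add_smul n n' _)

noncomputable def AvecHom : (Fin k →₀ ℕ) →+ (Fin d → ℤ) × ℤ :=
  ⟨⟨Avec m, Avec_zero m⟩, Avec_add m⟩

def deg (u : Fin k →₀ ℕ) : ℕ := u.sum fun _ n => n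

theorem deg_add (u v : Fin k →₀ ℕ) : deg (u + v) = deg u + deg v :=
  Finsupp.sum_add_index' (fun _ => rfl) (fun _ n n' => rfl)

noncomputable def degHom : (Fin k →₀ ℕ) →+ ℕ := ⟨⟨deg, Finsupp.sum_zero_index⟩, deg_add⟩

theorem Avec_single (t : Fin k) (n : ℕ) :
    Avec m (Finsupp.single t n) = n • (m t, 1) := by
  rw [Avec, Finsupp.sum_single_index]; exact zero_smul ℕ _

theorem Avec_snd (u : Fin k →₀ ℕ) : (Avec m u).2 = (deg u : ℤ) := by
  rw [Avec, deg, Finsupp.sum, Finsupp.sum, Prod.snd_sum, Nat.cast_sum]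
  exact Finset.sum_congr rfl fun t _ => by simp

theorem deg_eq_sum (u : Fin k →₀ ℕ) : deg u = ∑ t : Fin k, u t :=
  Finsupp.sum_fintype _ _ fun _ => rfl

theorem Avec_fst_apply (u : Fin k →₀ ℕ) (x : Fin d) :
    (Avec m u).1 x = ∑ t : Fin k, (u t : ℤ) * m t x := by
  rw [Avec, Finsupp.sum, Prod.fst_sum, Finset.sum_apply]
  have h1 : ∀ t, ((u t • ((m t, 1) : (Fin d → ℤ) × ℤ)).1) x = (u t : ℤ) * m t x := by
    intro t; simp [Prod.smul_mk]
  calc ∑ t ∈ u.support, ((u t • ((m t, 1) : (Fin d → ℤ) × ℤ)).1) x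
      = ∑ t ∈ u.support, (u t : ℤ) * m t x := Finset.sum_congr rfl fun t _ => h1 t
    _ = ∑ t : Fin k, (u t : ℤ) * m t x := by
        refine Finset.sum_subset (Finset.subset_univ _) fun t _ ht => ?_
        rw [Finsupp.notMem_support_iff.mp ht]; simp

theorem binomial_mem (u v : Fin k →₀ ℕ) (h : Avec m u = Avec m v) :
    MvPolynomial.monomial u (1:ℂ) - MvPolynomial.monomial v 1 ∈ toricIdeal m := by
  have : toricIdeal m = RingHom.ker (phi m) := rfl
  rw [this, RingHom.mem_ker, map_sub, phi_monomial, phi_monomial, h, sub_self]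

end helpers

def castFun {d : ℕ} (z : Fin d → ℤ) : Fin d → ℝ := fun x => (z x : ℝ)

section geom
variable {d k : ℕ} {m : Fin k → Fin d → ℤ} {P : Set (Fin d → ℝ)}

theorem deg_eq_zero_iff {u : Fin k →₀ ℕ} : deg u = 0 ↔ u = 0 := by
  constructor
  · intro h
    ext t
    have := (Finset.sum_eq_zero_iff.mp (by rw [← deg_eq_sum]; exact h)) t (Finset.mem_univ t)
    simpa using this
  · rintro rfl; exact Finsupp.sum_zero_index

theorem cast_Avec_mem (hconv : Convex ℝ P) (hpts : ∀ t, castFun (m t) ∈ P)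
    (hne : P.Nonempty) (u : Fin k →₀ ℕ) :
    castFun ((Avec m u).1) ∈ ((deg u : ℕ) : ℝ) • P := by
  rcases Nat.eq_zero_or_pos (deg u) with h0 | hpos
  · have hu : u = 0 := deg_eq_zero_iff.mp h0
    subst hu
    rw [h0, Avec_zero]
    have : castFun (0 : (Fin d → ℤ) × ℤ).1 = 0 := by funext x; simp [castFun]
    rw [this]
    rw [Nat.cast_zero, Set.zero_smul_set hne]
    exact Set.mem_zero.mpr rfl
  · set n := deg u with hn
    have hnne : (n:ℝ) ≠ 0 := by positivity
    have hc : ∑ t : Fin k, ((u t : ℝ)/(n:ℝ)) • castFun (m t) ∈ P := by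
      refine hconv.sum_mem (fun t _ => by positivity) ?_ (fun t _ => hpts t)
      rw [← Finset.sum_div]
      rw [show ∑ t : Fin k, ((u t : ℕ) : ℝ) = ((n : ℕ) : ℝ) by
        rw [hn, deg_eq_sum]; push_cast; ring]
      field_simp
    have hmem := Set.smul_mem_smul_set (a := (n:ℝ)) hc
    have heq : castFun ((Avec m u).1) =
        (n:ℝ) • ∑ t : Fin k, ((u t : ℝ)/(n:ℝ)) • castFun (m t) := by
      funext x
      rw [Pi.smul_apply, Finset.sum_apply]
      simp only [Pi.smul_apply, smul_eq_mul, castFun]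
      rw [Finset.mul_sum, Avec_fst_apply]
      push_cast
      refine Finset.sum_congr rfl fun t _ => ?_
      field_simp
    rw [heq]
    exact hmem

theorem exists_factorization
    (henum : ∀ p : Fin d → ℤ, (fun i => (p i : ℝ)) ∈ P ↔ p ∈ Set.range m)
    (hnorm : ∀ l : ℕ, 1 ≤ l → ∀ s : Fin d → ℤ,
      (fun i => (s i : ℝ)) ∈ (l : ℝ) • P →
      ∃ y : Fin l → Fin d → ℤ, (∀ j, (fun i => (y j i : ℝ)) ∈ P) ∧ s = ∑ j, y j)
    (hne : P.Nonempty) (n : ℕ) (z : Fin d → ℤ)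
    (hz : castFun z ∈ (n:ℝ) • P) :
    ∃ u : Fin k →₀ ℕ, deg u = n ∧ (Avec m u).1 = z := by
  rcases Nat.eq_zero_or_pos n with rfl | hpos
  · refine ⟨0, Finsupp.sum_zero_index, ?_⟩
    rw [Nat.cast_zero, Set.zero_smul_set hne] at hz
    have hz0 : castFun z = 0 := Set.mem_zero.mp hz
    have hzz : z = 0 := by
      funext x
      have h2 : (z x : ℝ) = 0 := by simpa [castFun] using congrFun hz0 x
      have h3 : z x = 0 := by exact_mod_cast h2
      simpa using h3
    rw [Avec_zero, hzz]; rfl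
  · obtain ⟨y, hy, hsum⟩ := hnorm n hpos z hz
    have hex : ∀ j, ∃ i, m i = y j := fun j => (henum (y j)).mp (hy j)
    choose t ht using hex
    refine ⟨∑ j : Fin n, Finsupp.single (t j) 1, ?_, ?_⟩
    · have h4 : deg (∑ j : Fin n, Finsupp.single (t j) (1:ℕ)) =
          ∑ j : Fin n, deg (Finsupp.single (t j) (1:ℕ)) := map_sum degHom _ _
      rw [h4]
      simp [deg, Finsupp.sum_single_index]
    · have h5 : Avec m (∑ j : Fin n, Finsupp.single (t j) (1:ℕ)) =
          ∑ j : Fin n, Avec m (Finsupp.single (t j) (1:ℕ)) := map_sum (AvecHom m) _ _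
      rw [h5, Prod.fst_sum]
      rw [hsum]
      refine Finset.sum_congr rfl fun j _ => ?_
      show (Avec m (Finsupp.single (t j) 1)).1 = y j
      rw [Avec_single, one_smul, ht j]

end geom

section alg
variable {d k : ℕ} {m : Fin k → Fin d → ℤ}

open MvPolynomial

theorem mem_of_binomials {J : Ideal (MvPolynomial (Fin k) ℂ)}
    (hbin : ∀ (p : MvPolynomial (Fin k) ℂ), p ∈ toricIdeal m → ∀ u v : Fin k →₀ ℕ,
      u ∈ p.support → v ∈ p.support → Avec m u = Avec m v →
      monomial u (1:ℂ) - monomial v 1 ∈ J)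
    {p : MvPolynomial (Fin k) ℂ} (hp : p ∈ toricIdeal m) : p ∈ J := by
  generalize hc : p.support.card = c
  induction c using Nat.strong_induction_on generalizing p with
  | _ c ih =>
    rcases eq_or_ne p 0 with rfl | hp0
    · exact J.zero_mem
    · obtain ⟨u, hu⟩ := Finset.nonempty_of_ne_empty
        (fun h => hp0 (MvPolynomial.support_eq_empty.mp h))
      have hfib := ker_fiber_sum hp (Avec m u)
      have hex : ∃ v ∈ p.support, v ≠ u ∧ Avec m v = Avec m u := by
        by_contra hcon
        push_neg at hcon
        have heq : ∑ v ∈ p.support, (if Avec m v = Avec m u then coeff v p else 0)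
            = coeff u p := by
          rw [Finset.sum_eq_single u]
          · simp
          · intro v hv hvu
            rw [if_neg (hcon v hv hvu)]
          · intro h; exact absurd hu h
        rw [heq] at hfib
        exact (MvPolynomial.mem_support_iff.mp hu) hfib
      obtain ⟨v, hv, hvu, hAv⟩ := hex
      set c0 := coeff u p with hc0
      set q := p - C c0 * (monomial u 1 - monomial v 1) with hqdef
      have hbmem : monomial u (1:ℂ) - monomial v 1 ∈ toricIdeal m :=
        binomial_mem m u v hAv.symm
      have hq : q ∈ toricIdeal m := Submodule.sub_mem _ hp (Ideal.mul_mem_left _ _ hbmem)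
      have hsub : q.support ⊆ p.support.erase u := by
        intro w hw
        have hwq : coeff w q ≠ 0 := MvPolynomial.mem_support_iff.mp hw
        have hcoeff : coeff w q = coeff w p - c0 * ((if u = w then (1:ℂ) else 0)
            - (if v = w then 1 else 0)) := by
          rw [hqdef, MvPolynomial.coeff_sub, MvPolynomial.coeff_C_mul,
            MvPolynomial.coeff_sub, MvPolynomial.coeff_monomial, MvPolynomial.coeff_monomial]
        rw [Finset.mem_erase]
        constructor
        · rintro rfl
          rw [if_pos rfl, if_neg hvu] at hcoeff
          simp [hc0] at hcoeff
          exact hwq hcoeff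
        · rw [MvPolynomial.mem_support_iff]
          intro hwp
          rcases eq_or_ne u w with rfl | huw
          · rw [if_pos rfl, if_neg hvu] at hcoeff
            exact (MvPolynomial.mem_support_iff.mp hu) hwp
          · rcases eq_or_ne v w with rfl | hvw
            · exact (MvPolynomial.mem_support_iff.mp hv) hwp
            · rw [if_neg huw, if_neg hvw] at hcoeff
              simp [hwp] at hcoeff
              exact hwq hcoeff
      have hcard : q.support.card < c := by
        calc q.support.card ≤ (p.support.erase u).card := Finset.card_le_card hsub
          _ < p.support.card := Finset.card_erase_lt_of_mem hu
          _ = c := hc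
      have hqJ := ih _ hcard hq rfl
      have hpq : p = q + C c0 * (monomial u 1 - monomial v 1) := by rw [hqdef]; ring
      rw [hpq]
      exact J.add_mem hqJ (Ideal.mul_mem_left _ _ (hbin p hp u v hu hv hAv.symm))

theorem single_le_of_mem_support {u : Fin k →₀ ℕ} {b : Fin k} (hb : b ∈ u.support) :
    Finsupp.single b 1 ≤ u :=
  Finsupp.single_le_iff.mpr (Nat.one_le_iff_ne_zero.mpr (Finsupp.mem_support_iff.mp hb))

theorem single_add_sub {u : Fin k →₀ ℕ} {b : Fin k} (hb : b ∈ u.support) :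
    Finsupp.single b 1 + (u - Finsupp.single b 1) = u :=
  add_tsub_cancel_of_le (single_le_of_mem_support hb)

theorem Avec_sub_single {u : Fin k →₀ ℕ} {b : Fin k} (hb : b ∈ u.support) :
    Avec m u = (m b, 1) + Avec m (u - Finsupp.single b 1) := by
  conv_lhs => rw [← single_add_sub hb]
  rw [Avec_add, Avec_single, one_smul]

theorem deg_sub_single {u : Fin k →₀ ℕ} {b : Fin k} (hb : b ∈ u.support) :
    deg u = 1 + deg (u - Finsupp.single b 1) := by
  conv_lhs => rw [← single_add_sub hb]
  rw [deg_add]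
  congr 1
  rw [deg, Finsupp.sum_single_index rfl]

theorem bridge {J : Ideal (MvPolynomial (Fin k) ℂ)} {u w : Fin k →₀ ℕ} {b : Fin k}
    (hbu : b ∈ u.support) (hbw : b ∈ w.support)
    (hinner : monomial (u - Finsupp.single b 1) (1:ℂ)
      - monomial (w - Finsupp.single b 1) 1 ∈ J) :
    monomial u (1:ℂ) - monomial w 1 ∈ J := by
  have heq : monomial u (1:ℂ) - monomial w 1 =
      monomial (Finsupp.single b 1) 1 *
        (monomial (u - Finsupp.single b 1) (1:ℂ) - monomial (w - Finsupp.single b 1) 1) := by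
    rw [mul_sub, MvPolynomial.monomial_mul, MvPolynomial.monomial_mul, one_mul,
      single_add_sub hbu, single_add_sub hbw]
  rw [heq]
  exact Ideal.mul_mem_left _ _ hinner

theorem deg_eq_one {u : Fin k →₀ ℕ} (h : deg u = 1) : ∃ t, u = Finsupp.single t 1 := by
  have hne : u ≠ 0 := fun h0 => by rw [h0] at h; exact one_ne_zero ((deg_eq_zero_iff.mpr rfl) ▸ h).symm
  obtain ⟨t, ht⟩ := Finsupp.support_nonempty_iff.mpr hne
  have hsum : ∑ t' : Fin k, u t' = 1 := by rw [← deg_eq_sum]; exact h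
  rw [← Finset.add_sum_erase _ _ (Finset.mem_univ t)] at hsum
  have ht1 : 1 ≤ u t := Nat.one_le_iff_ne_zero.mpr (Finsupp.mem_support_iff.mp ht)
  have hut : u t = 1 ∧ ∑ t' ∈ Finset.univ.erase t, u t' = 0 := by omega
  refine ⟨t, ?_⟩
  ext t'
  rcases eq_or_ne t' t with rfl | htt
  · rw [hut.1, Finsupp.single_eq_same]
  · rw [Finsupp.single_eq_of_ne' (Ne.symm htt)]
    exact Finset.sum_eq_zero_iff.mp hut.2 t' (Finset.mem_erase.mpr ⟨htt, Finset.mem_univ t'⟩)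

theorem exists_mem_support_of_deg_pos {u : Fin k →₀ ℕ} (h : 1 ≤ deg u) :
    ∃ t, t ∈ u.support := by
  by_contra hcon
  push_neg at hcon
  have : u = 0 := by ext t; exact Finsupp.notMem_support_iff.mp (hcon t)
  rw [this] at h
  rw [deg_eq_zero_iff.mpr rfl] at h
  omega

end alg

section main
variable {d k : ℕ} {m : Fin k → Fin d → ℤ} {P : Set (Fin d → ℝ)}
open MvPolynomial

theorem deg_eq_of_Avec_eq {a b : Fin k →₀ ℕ} (h : Avec m a = Avec m b) : deg a = deg b := by
  have h2 := congrArg Prod.snd h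
  rw [Avec_snd, Avec_snd] at h2
  exact_mod_cast h2

theorem binomial_mem_span
    (hconv : Convex ℝ P) (hpts : ∀ t, castFun (m t) ∈ P)
    (hinj : Function.Injective m)
    (henum : ∀ p : Fin d → ℤ, (fun i => (p i : ℝ)) ∈ P ↔ p ∈ Set.range m)
    (hnorm : ∀ l : ℕ, 1 ≤ l → ∀ s : Fin d → ℤ,
      (fun i => (s i : ℝ)) ∈ (l : ℝ) • P →
      ∃ y : Fin l → Fin d → ℤ, (∀ j, (fun i => (y j i : ℝ)) ∈ P) ∧ s = ∑ j, y j)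
    (r : ℕ)
    (hRHS : ∀ r' : ℕ, r < r' → ∀ s : Fin d → ℤ, (fun i => (s i : ℝ)) ∈ (r' : ℝ) • P →
        ∀ i j : Fin k,
          (fun x => ((s x - m i x : ℤ) : ℝ)) ∈ ((r' : ℝ) - 1) • P →
          (fun x => ((s x - m j x : ℤ) : ℝ)) ∈ ((r' : ℝ) - 1) • P →
          Relation.ReflTransGen (fun i₁ i₂ : Fin k =>
            (fun x => ((s x - m i₁ x : ℤ) : ℝ)) ∈ ((r' : ℝ) - 1) • P ∧
            (fun x => ((s x - m i₂ x : ℤ) : ℝ)) ∈ ((r' : ℝ) - 1) • P ∧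
            (m i₁ = m i₂ ∨
              (fun x => ((s x - m i₁ x - m i₂ x : ℤ) : ℝ)) ∈ ((r' : ℝ) - 2) • P)) i j)
    (n : ℕ) :
    ∀ u v : Fin k →₀ ℕ, deg u = n → Avec m u = Avec m v →
      monomial u (1:ℂ) - monomial v 1 ∈
        Ideal.span {p : MvPolynomial (Fin k) ℂ | p ∈ toricIdeal m ∧ p.totalDegree ≤ r} := by
  induction n using Nat.strong_induction_on with
  | _ n ih =>
  intro u v hdu hA
  set J := Ideal.span {p : MvPolynomial (Fin k) ℂ | p ∈ toricIdeal m ∧ p.totalDegree ≤ r}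
    with hJdef
  have hdv : deg v = n := by rw [← deg_eq_of_Avec_eq hA]; exact hdu
  by_cases hnr : n ≤ r
  · refine Ideal.subset_span ⟨binomial_mem m u v hA, ?_⟩
    have hbound : (monomial u (1:ℂ) - monomial v 1).totalDegree ≤ n := by
      rw [sub_eq_add_neg]
      refine le_trans (MvPolynomial.totalDegree_add _ _) ?_
      rw [MvPolynomial.totalDegree_neg,
        MvPolynomial.totalDegree_monomial u (one_ne_zero (α := ℂ)),
        MvPolynomial.totalDegree_monomial v (one_ne_zero (α := ℂ))]
      exact max_le (le_of_eq hdu) (le_of_eq hdv)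
    exact le_trans hbound hnr
  push_neg at hnr
  rcases eq_or_ne u v with rfl | huv
  · rw [sub_self]; exact J.zero_mem
  have hn1 : 1 ≤ n := by omega
  rcases eq_or_lt_of_le hn1 with h1 | hn2
  · obtain ⟨a, ha⟩ := deg_eq_one (hdu.trans h1.symm)
    obtain ⟨b, hb⟩ := deg_eq_one (hdv.trans h1.symm)
    rw [ha, hb, Avec_single, Avec_single, one_smul, one_smul] at hA
    have : a = b := hinj (congrArg Prod.fst hA)
    rw [ha, hb, this] at huv
    exact absurd rfl huv
  -- now 2 ≤ n
  obtain ⟨i, hi⟩ := exists_mem_support_of_deg_pos (by omega : 1 ≤ deg u)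
  obtain ⟨j, hj⟩ := exists_mem_support_of_deg_pos (by rw [hdv]; omega)
  have hPne : P.Nonempty := ⟨castFun (m i), hpts i⟩
  set s : Fin d → ℤ := (Avec m u).1 with hsdef
  have hsmem : (fun x => ((s x : ℤ) : ℝ)) ∈ ((n:ℕ) : ℝ) • P := by
    have h2 := cast_Avec_mem hconv hpts hPne u
    rw [hdu] at h2
    exact h2
  have hdiv : ∀ (w : Fin k →₀ ℕ), Avec m w = Avec m u → ∀ a ∈ w.support,
      (fun x => ((s x - m a x : ℤ):ℝ)) ∈ ((n:ℝ) - 1) • P := by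
    intro w hw a haw
    have h1 : Avec m w = (m a, 1) + Avec m (w - Finsupp.single a 1) := Avec_sub_single (m := m) haw
    have hfst : (Avec m (w - Finsupp.single a 1)).1 = fun x => s x - m a x := by
      have h2 := congrArg Prod.fst h1
      rw [hw] at h2
      rw [← hsdef] at h2
      funext x
      have h3 := congrFun h2 x
      simp only [Prod.fst_add, Pi.add_apply] at h3
      omega
    have hdegw : deg w = n := by rw [deg_eq_of_Avec_eq hw]; exact hdu
    have hdw : deg (w - Finsupp.single a 1) = n - 1 := by
      have h2 := deg_sub_single haw
      omega
    have h4 := cast_Avec_mem hconv hpts hPne (w - Finsupp.single a 1)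
    rw [hdw, hfst] at h4
    have hcast : ((n-1 : ℕ) : ℝ) = (n:ℝ) - 1 := by
      rw [Nat.cast_sub hn1]; norm_num
    rw [hcast] at h4
    exact h4
  have hRT := hRHS n hnr s hsmem i j (hdiv u rfl i hi) (hdiv v hA.symm j hj)
  have hchain : ∀ j₂ : Fin k, Relation.ReflTransGen (fun i₁ i₂ : Fin k =>
            (fun x => ((s x - m i₁ x : ℤ) : ℝ)) ∈ ((n : ℝ) - 1) • P ∧
            (fun x => ((s x - m i₂ x : ℤ) : ℝ)) ∈ ((n : ℝ) - 1) • P ∧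
            (m i₁ = m i₂ ∨
              (fun x => ((s x - m i₁ x - m i₂ x : ℤ) : ℝ)) ∈ ((n : ℝ) - 2) • P)) i j₂ →
      ∃ u₂, Avec m u₂ = Avec m u ∧ j₂ ∈ u₂.support ∧
        monomial u (1:ℂ) - monomial u₂ 1 ∈ J := by
    intro j₂ hrt
    induction hrt with
    | refl => exact ⟨u, rfl, hi, by rw [sub_self]; exact J.zero_mem⟩
    | @tail b c hab hbc ihc =>
      obtain ⟨u₂, hA₂, hb₂, hJ₂⟩ := ihc
      obtain ⟨hmem1, hmem2, hor⟩ := hbc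
      rcases hor with heqm | hmem3
      · exact ⟨u₂, hA₂, (hinj heqm) ▸ hb₂, hJ₂⟩
      · have hcast2 : ((n-2:ℕ):ℝ) = (n:ℝ) - 2 := by
          rw [Nat.cast_sub (by omega : 2 ≤ n)]; norm_num
        have hz : castFun (fun x => s x - m b x - m c x) ∈ ((n-2:ℕ):ℝ) • P := by
          rw [hcast2]; exact hmem3
        obtain ⟨w₀, hw₀deg, hw₀⟩ := exists_factorization henum hnorm hPne (n-2) _ hz
        set w := Finsupp.single b 1 + Finsupp.single c 1 + w₀ with hwdef
        have hwb1 : 1 ≤ w b := by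
          rw [hwdef]
          simp only [Finsupp.add_apply, Finsupp.single_eq_same]
          omega
        have hwc1 : 1 ≤ w c := by
          rw [hwdef]
          simp only [Finsupp.add_apply, Finsupp.single_eq_same]
          omega
        have hbw : b ∈ w.support := Finsupp.mem_support_iff.mpr (by omega)
        have hcw : c ∈ w.support := Finsupp.mem_support_iff.mpr (by omega)
        have hdegw : deg w = n := by
          rw [hwdef, deg_add, deg_add, deg, deg, Finsupp.sum_single_index rfl,
            Finsupp.sum_single_index rfl]
          have : deg w₀ = n - 2 := hw₀deg
          rw [deg] at this
          omega
        have hAw : Avec m w = Avec m u := by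
          have hfst : (Avec m w).1 = (Avec m u).1 := by
            rw [hwdef, Avec_add, Avec_add, Avec_single, Avec_single, one_smul, one_smul]
            funext x
            simp only [Prod.fst_add, Pi.add_apply]
            have h5 := congrFun hw₀ x
            rw [← hsdef]
            omega
          have hsnd : (Avec m w).2 = (Avec m u).2 := by
            rw [Avec_snd, Avec_snd, hdegw, hdu]
          exact Prod.ext hfst hsnd
        have hdu₂ : deg u₂ = n := by rw [deg_eq_of_Avec_eq hA₂]; exact hdu
        have hinner : monomial (u₂ - Finsupp.single b 1) (1:ℂ)
            - monomial (w - Finsupp.single b 1) 1 ∈ J := by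
          refine ih (n-1) (by omega) _ _ ?_ ?_
          · have h6 := deg_sub_single hb₂
            omega
          · have h7 := Avec_sub_single (m := m) hb₂
            have h8 := Avec_sub_single (m := m) hbw
            rw [hA₂] at h7
            rw [hAw] at h8
            have h9 : ((m b, 1) : (Fin d → ℤ) × ℤ) + Avec m (u₂ - Finsupp.single b 1)
                = (m b, 1) + Avec m (w - Finsupp.single b 1) := by rw [← h7, ← h8]
            exact add_left_cancel h9
        have hJw : monomial u (1:ℂ) - monomial w 1 ∈ J := by
          have hbr := bridge hb₂ hbw hinner
          have heq2 : monomial u (1:ℂ) - monomial w 1 =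
              (monomial u 1 - monomial u₂ 1) + (monomial u₂ 1 - monomial w 1) := by ring
          rw [heq2]
          exact J.add_mem hJ₂ hbr
        exact ⟨w, hAw, hcw, hJw⟩
  obtain ⟨u₂, hA₂, hj₂, hJ₂⟩ := hchain j hRT
  have hdu₂ : deg u₂ = n := by rw [deg_eq_of_Avec_eq hA₂]; exact hdu
  have hfinal : monomial u₂ (1:ℂ) - monomial v 1 ∈ J := by
    refine bridge hj₂ hj ?_
    refine ih (n-1) (by omega) _ _ ?_ ?_
    · have h6 := deg_sub_single hj₂
      omega
    · have h7 := Avec_sub_single (m := m) hj₂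
      have h8 := Avec_sub_single (m := m) hj
      rw [hA₂, hA] at h7
      have h9 : ((m j, 1) : (Fin d → ℤ) × ℤ) + Avec m (u₂ - Finsupp.single j 1)
          = (m j, 1) + Avec m (v - Finsupp.single j 1) := by rw [← h7, ← h8]
      exact add_left_cancel h9
  have heq3 : monomial u (1:ℂ) - monomial v 1 =
      (monomial u 1 - monomial u₂ 1) + (monomial u₂ 1 - monomial v 1) := by ring
  rw [heq3]
  exact J.add_mem hJ₂ hfinal

end main

section forward
variable {d k : ℕ}
open MvPolynomial

/-- the "moves" relation -/
def Mv (m : Fin k → Fin d → ℤ) (r : ℕ) (u v : Fin k →₀ ℕ) : Prop :=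
  ∃ w a b, u = w + a ∧ v = w + b ∧ Avec m a = Avec m b ∧ deg a ≤ r

open Classical in
noncomputable def wt (m : Fin k → Fin d → ℤ) (r : ℕ) (u₀ v : Fin k →₀ ℕ) : ℂ :=
  if (Avec m v = Avec m u₀ ∧ Relation.ReflTransGen (Mv m r) v u₀) then 1 else 0

noncomputable def F (m : Fin k → Fin d → ℤ) (r : ℕ) (u₀ : Fin k →₀ ℕ)
    (p : MvPolynomial (Fin k) ℂ) : ℂ :=
  ∑ v ∈ p.support, wt m r u₀ v * coeff v p

variable {m : Fin k → Fin d → ℤ} {r : ℕ} {u₀ : Fin k →₀ ℕ}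

theorem F_superset {p : MvPolynomial (Fin k) ℂ} {T : Finset (Fin k →₀ ℕ)}
    (h : p.support ⊆ T) : F m r u₀ p = ∑ v ∈ T, wt m r u₀ v * coeff v p := by
  refine Finset.sum_subset h fun v _ hv => ?_
  rw [MvPolynomial.notMem_support_iff.mp hv, mul_zero]

theorem F_add (p q : MvPolynomial (Fin k) ℂ) :
    F m r u₀ (p + q) = F m r u₀ p + F m r u₀ q := by
  rw [F_superset (MvPolynomial.support_add (p := p) (q := q)),
    F_superset (T := p.support ∪ q.support) Finset.subset_union_left,
    F_superset (T := p.support ∪ q.support) Finset.subset_union_right,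
    ← Finset.sum_add_distrib]
  refine Finset.sum_congr rfl fun v _ => ?_
  rw [MvPolynomial.coeff_add, mul_add]

theorem F_smul (c : ℂ) (p : MvPolynomial (Fin k) ℂ) :
    F m r u₀ (c • p) = c * F m r u₀ p := by
  rw [F_superset (T := p.support) MvPolynomial.support_smul, F,
    Finset.mul_sum]
  refine Finset.sum_congr rfl fun v _ => ?_
  rw [MvPolynomial.coeff_smul, smul_eq_mul]
  ring

theorem F_zero : F m r u₀ 0 = 0 := by
  rw [F]
  simp

theorem F_monomial (y : Fin k →₀ ℕ) (c : ℂ) : F m r u₀ (monomial y c) = wt m r u₀ y * c := by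
  rcases eq_or_ne c 0 with rfl | hc
  · rw [mul_zero, map_zero, F_zero]
  · rw [F, MvPolynomial.support_monomial, if_neg hc, Finset.sum_singleton,
      MvPolynomial.coeff_monomial, if_pos rfl]

theorem F_finsum {α : Type} [DecidableEq α] (t : Finset α) (f : α → MvPolynomial (Fin k) ℂ) :
    F m r u₀ (∑ a ∈ t, f a) = ∑ a ∈ t, F m r u₀ (f a) := by
  induction t using Finset.induction_on with
  | empty => simp [F_zero]
  | @insert _ _ hni ih =>
      rw [Finset.sum_insert hni, Finset.sum_insert hni, F_add, ih]

theorem Mv_symm : Symmetric (Mv m r) := by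
  rintro u v ⟨w, a, b, hu, hv, hA, hd⟩
  exact ⟨w, b, a, hv, hu, hA.symm, by rw [← deg_eq_of_Avec_eq hA]; exact hd⟩

theorem wt_step {w v v' : Fin k →₀ ℕ} (hA : Avec m v = Avec m v') (hd : deg v ≤ r) :
    wt m r u₀ (w + v) = wt m r u₀ (w + v') := by
  have hiff : (Avec m (w + v) = Avec m u₀ ∧ Relation.ReflTransGen (Mv m r) (w + v) u₀) ↔
      (Avec m (w + v') = Avec m u₀ ∧ Relation.ReflTransGen (Mv m r) (w + v') u₀) := by
    have hAeq : Avec m (w + v) = Avec m (w + v') := by rw [Avec_add, Avec_add, hA]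
    have hmv : Mv m r (w + v') (w + v) := ⟨w, v', v, rfl, rfl, hA.symm,
      by rw [← deg_eq_of_Avec_eq hA]; exact hd⟩
    constructor
    · rintro ⟨h1, h2⟩
      exact ⟨hAeq ▸ h1, Relation.ReflTransGen.head hmv h2⟩
    · rintro ⟨h1, h2⟩
      exact ⟨hAeq.symm ▸ h1, Relation.ReflTransGen.head (Mv_symm hmv) h2⟩
  simp only [wt]
  by_cases hc : Avec m (w + v) = Avec m u₀ ∧ Relation.ReflTransGen (Mv m r) (w + v) u₀
  · rw [if_pos hc, if_pos (hiff.mp hc)]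
  · rw [if_neg hc, if_neg (fun hc2 => hc (hiff.mpr hc2))]

end forward

section forward2
variable {d k : ℕ}
open MvPolynomial
variable {m : Fin k → Fin d → ℤ} {r : ℕ} {u₀ : Fin k →₀ ℕ}

theorem F_vanish_gen {p : MvPolynomial (Fin k) ℂ} (hp : p ∈ toricIdeal m)
    (hdeg : p.totalDegree ≤ r) (w : Fin k →₀ ℕ) :
    F m r u₀ (monomial w 1 * p) = 0 := by
  classical
  have hexp : monomial w (1:ℂ) * p = ∑ v ∈ p.support, monomial (w + v) (coeff v p) := by
    conv_lhs => rw [p.as_sum, Finset.mul_sum]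
    refine Finset.sum_congr rfl fun v _ => ?_
    rw [MvPolynomial.monomial_mul, one_mul]
  rw [hexp, F_finsum]
  have hterm : ∀ v, F m r u₀ (monomial (w + v) (coeff v p)) = wt m r u₀ (w + v) * coeff v p :=
    fun v => F_monomial _ _
  rw [Finset.sum_congr rfl fun v _ => hterm v]
  rw [← Finset.sum_fiberwise_of_maps_to (g := Avec m) (t := p.support.image (Avec m))
    (fun v hv => Finset.mem_image_of_mem _ hv)]
  refine Finset.sum_eq_zero fun g hg => ?_
  rcases Finset.eq_empty_or_nonempty (p.support.filter (fun v => Avec m v = g))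
    with hemp | ⟨v₀, hv₀⟩
  · rw [hemp, Finset.sum_empty]
  · have hv₀s := (Finset.mem_filter.mp hv₀).1
    have hv₀g := (Finset.mem_filter.mp hv₀).2
    have hwt : ∀ v ∈ p.support.filter (fun v => Avec m v = g),
        wt m r u₀ (w + v) = wt m r u₀ (w + v₀) := by
      intro v hv
      have hvs := (Finset.mem_filter.mp hv).1
      have hvg := (Finset.mem_filter.mp hv).2
      exact wt_step (hvg.trans hv₀g.symm)
        (le_trans (MvPolynomial.le_totalDegree hvs) hdeg)
    rw [Finset.sum_congr rfl fun v hv => by rw [hwt v hv]]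
    rw [← Finset.mul_sum]
    have hzero : ∑ v ∈ p.support.filter (fun v => Avec m v = g), coeff v p = 0 := by
      have h2 := ker_fiber_sum hp g
      rw [← Finset.sum_filter] at h2
      exact h2
    rw [hzero, mul_zero]

end forward2

section forward3
variable {d k : ℕ}
open MvPolynomial
variable {m : Fin k → Fin d → ℤ} {r : ℕ} {u₀ : Fin k →₀ ℕ}

theorem F_vanish_span {x : MvPolynomial (Fin k) ℂ}
    (hx : x ∈ Ideal.span {p : MvPolynomial (Fin k) ℂ | p ∈ toricIdeal m ∧ p.totalDegree ≤ r}) :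
    F m r u₀ x = 0 := by
  classical
  set G : Set (MvPolynomial (Fin k) ℂ) :=
    {x | ∃ (w : Fin k →₀ ℕ) (p : MvPolynomial (Fin k) ℂ),
      (p ∈ toricIdeal m ∧ p.totalDegree ≤ r) ∧ x = monomial w 1 * p} with hG
  set N : Submodule ℂ (MvPolynomial (Fin k) ℂ) := Submodule.span ℂ G with hN
  have hmul : ∀ y ∈ N, ∀ q, q * y ∈ N := by
    intro y hy
    refine Submodule.span_induction ?_ ?_ ?_ ?_ hy
    · rintro x ⟨w, p, hp, rfl⟩ q
      rw [q.as_sum, Finset.sum_mul]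
      refine Submodule.sum_mem _ fun w' _ => ?_
      have heq : monomial w' (coeff w' q) * (monomial w (1:ℂ) * p)
          = coeff w' q • (monomial (w' + w) 1 * p) := by
        rw [← mul_assoc, MvPolynomial.monomial_mul, mul_one, ← smul_mul_assoc,
          MvPolynomial.smul_monomial, smul_eq_mul, mul_one]
      rw [heq]
      exact Submodule.smul_mem _ _ (Submodule.subset_span ⟨w' + w, p, hp, rfl⟩)
    · intro q; rw [mul_zero]; exact N.zero_mem
    · intro a b _ _ ha hb q; rw [mul_add]; exact N.add_mem (ha q) (hb q)
    · intro c a _ ha q; rw [mul_smul_comm]; exact N.smul_mem _ (ha q)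
  have hspan : x ∈ N := by
    refine Submodule.span_induction ?_ ?_ ?_ ?_ hx
    · intro p hp
      refine Submodule.subset_span ⟨0, p, hp, ?_⟩
      rw [MvPolynomial.monomial_zero', map_one, one_mul]
    · exact N.zero_mem
    · intro a b _ _ ha hb; exact N.add_mem ha hb
    · intro q a _ ha
      rw [smul_eq_mul]
      exact hmul a ha q
  refine Submodule.span_induction ?_ ?_ ?_ ?_ hspan
  · rintro y ⟨w, p, hp, rfl⟩
    exact F_vanish_gen hp.1 hp.2 w
  · exact F_zero
  · intro a b _ _ ha hb; rw [F_add, ha, hb, add_zero]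
  · intro c a _ ha; rw [F_smul, ha, mul_zero]

theorem RT_Mv_of_gen
    (hgen : toricIdeal m
      = Ideal.span {p : MvPolynomial (Fin k) ℂ | p ∈ toricIdeal m ∧ p.totalDegree ≤ r})
    {u v : Fin k →₀ ℕ} (hA : Avec m u = Avec m v) :
    Relation.ReflTransGen (Mv m r) v u := by
  classical
  have hmem : monomial u (1:ℂ) - monomial v 1 ∈ toricIdeal m := binomial_mem m u v hA
  rw [hgen] at hmem
  have hF : F m r u (monomial u (1:ℂ) - monomial v 1) = 0 := F_vanish_span hmem
  rcases eq_or_ne u v with rfl | huv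
  · exact Relation.ReflTransGen.refl
  have hsub : (monomial u (1:ℂ) - monomial v 1)
      = monomial u 1 + (-1 : ℂ) • monomial v 1 := by
    rw [neg_one_smul]; ring
  rw [hsub, F_add, F_smul, F_monomial, F_monomial, mul_one, mul_one] at hF
  have hwtu : wt m r u u = 1 := by
    rw [wt, if_pos ⟨rfl, Relation.ReflTransGen.refl⟩]
  rw [hwtu] at hF
  have hwtv : wt m r u v = 1 := by linear_combination -hF
  rw [wt] at hwtv
  by_contra hcon
  rw [if_neg ?_] at hwtv
  · exact one_ne_zero hwtv.symm
  · intro hcond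
    exact hcon hcond.2

end forward3

section geom2
variable {d k : ℕ} {m : Fin k → Fin d → ℤ} {P : Set (Fin d → ℝ)}
open MvPolynomial

theorem mem_one (hconv : Convex ℝ P) (hpts : ∀ t, castFun (m t) ∈ P)
    {w : Fin k →₀ ℕ} {n : ℕ} {s : Fin d → ℤ} (hd : deg w = n) (hn : 1 ≤ n)
    (hs : (Avec m w).1 = s) {a : Fin k} (ha : a ∈ w.support) :
    (fun x => ((s x - m a x : ℤ) : ℝ)) ∈ ((n:ℝ) - 1) • P := by
  have hPne : P.Nonempty := ⟨castFun (m a), hpts a⟩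
  have h1 : Avec m w = (m a, 1) + Avec m (w - Finsupp.single a 1) :=
    Avec_sub_single (m := m) ha
  have hfst : (Avec m (w - Finsupp.single a 1)).1 = fun x => s x - m a x := by
    have h2 := congrArg Prod.fst h1
    rw [hs] at h2
    funext x
    have h3 := congrFun h2 x
    simp only [Prod.fst_add, Pi.add_apply] at h3
    omega
  have hdw : deg (w - Finsupp.single a 1) = n - 1 := by
    have h2 := deg_sub_single ha
    omega
  have h4 := cast_Avec_mem hconv hpts hPne (w - Finsupp.single a 1)
  rw [hdw, hfst] at h4
  rw [show ((n-1 : ℕ) : ℝ) = (n:ℝ) - 1 by rw [Nat.cast_sub hn]; norm_num] at h4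
  exact h4

theorem mem_two (hconv : Convex ℝ P) (hpts : ∀ t, castFun (m t) ∈ P)
    {w : Fin k →₀ ℕ} {n : ℕ} {s : Fin d → ℤ} (hd : deg w = n)
    (hs : (Avec m w).1 = s) {a b : Fin k} (ha : a ∈ w.support) (hb : b ∈ w.support)
    (hab : a ≠ b) :
    (fun x => ((s x - m a x - m b x : ℤ) : ℝ)) ∈ ((n:ℝ) - 2) • P := by
  have hPne : P.Nonempty := ⟨castFun (m a), hpts a⟩
  have hle : Finsupp.single a 1 + Finsupp.single b 1 ≤ w := by
    rw [Finsupp.le_def]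
    intro t
    rcases eq_or_ne t a with rfl | hta
    · rw [Finsupp.add_apply, Finsupp.single_eq_same, Finsupp.single_eq_of_ne' hab.symm]
      have := Finsupp.mem_support_iff.mp ha
      omega
    · rw [Finsupp.add_apply, Finsupp.single_eq_of_ne' (Ne.symm hta)]
      rcases eq_or_ne t b with rfl | htb
      · rw [Finsupp.single_eq_same]
        have := Finsupp.mem_support_iff.mp hb
        omega
      · rw [Finsupp.single_eq_of_ne' (Ne.symm htb)]
        omega
  set w' := w - (Finsupp.single a 1 + Finsupp.single b 1) with hw'
  have hwsum : Finsupp.single a 1 + Finsupp.single b 1 + w' = w := add_tsub_cancel_of_le hle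
  have hAw : Avec m w = (m a, 1) + (m b, 1) + Avec m w' := by
    conv_lhs => rw [← hwsum]
    rw [Avec_add, Avec_add, Avec_single, Avec_single, one_smul, one_smul]
  have hdegs : deg w = 2 + deg w' := by
    conv_lhs => rw [← hwsum]
    rw [deg_add, deg_add, deg, deg, Finsupp.sum_single_index rfl, Finsupp.sum_single_index rfl]
  have hn2 : 2 ≤ n := by omega
  have hfst : (Avec m w').1 = fun x => s x - m a x - m b x := by
    have h2 := congrArg Prod.fst hAw
    rw [hs] at h2
    funext x
    have h3 := congrFun h2 x
    simp only [Prod.fst_add, Pi.add_apply] at h3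
    omega
  have hdw : deg w' = n - 2 := by omega
  have h4 := cast_Avec_mem hconv hpts hPne w'
  rw [hdw, hfst] at h4
  rw [show ((n-2 : ℕ) : ℝ) = (n:ℝ) - 2 by rw [Nat.cast_sub hn2]; norm_num] at h4
  exact h4

end geom2

section final
variable {d k : ℕ}
open MvPolynomial

theorem Avec_eq_of_Mv {m : Fin k → Fin d → ℤ} {r : ℕ} {u v : Fin k →₀ ℕ}
    (h : Mv m r u v) : Avec m u = Avec m v := by
  obtain ⟨w, a, b, rfl, rfl, hA, _⟩ := h
  rw [Avec_add, Avec_add, hA]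

theorem Avec_eq_of_RT {m : Fin k → Fin d → ℤ} {r : ℕ} {u v : Fin k →₀ ℕ}
    (h : Relation.ReflTransGen (Mv m r) u v) : Avec m u = Avec m v := by
  induction h with
  | refl => rfl
  | tail _ hmv ih => exact ih.trans (Avec_eq_of_Mv hmv)

end final

/-- the toric ideal of a normal lattice polytope is generated in degree
at most `r` iff for every `s ∈ S(∇)_{r'}` with `r' > r` the relation `∼ₛ` on the
lattice points dividing `s` has exactly one equivalence class. -/
theorem generated_in_degree_iff_one_equivalence_class
    (d k : ℕ) (m : Fin k → Fin d → ℤ) (P : Set (Fin d → ℝ))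
    (hlat : P = convexHull ℝ (Set.range fun j => fun i => ((m j i : ℤ) : ℝ)))
    (hinj : Function.Injective m)
    (henum : ∀ p : Fin d → ℤ, (fun i => (p i : ℝ)) ∈ P ↔ p ∈ Set.range m)
    (hnorm : ∀ l : ℕ, 1 ≤ l → ∀ s : Fin d → ℤ,
      (fun i => (s i : ℝ)) ∈ (l : ℝ) • P →
      ∃ y : Fin l → Fin d → ℤ, (∀ j, (fun i => (y j i : ℝ)) ∈ P) ∧ s = ∑ j, y j)
    (r : ℕ) :
    GeneratedInDegreeLE (toricIdeal m) r ↔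
      ∀ r' : ℕ, r < r' → ∀ s : Fin d → ℤ, (fun i => (s i : ℝ)) ∈ (r' : ℝ) • P →
        ∀ i j : Fin k,
          -- `m i` and `m j` divide `s` in `S(∇)`:
          (fun x => ((s x - m i x : ℤ) : ℝ)) ∈ ((r' : ℝ) - 1) • P →
          (fun x => ((s x - m j x : ℤ) : ℝ)) ∈ ((r' : ℝ) - 1) • P →
          -- `m i ∼ₛ m j`:
          Relation.ReflTransGen (fun i₁ i₂ : Fin k =>
            (fun x => ((s x - m i₁ x : ℤ) : ℝ)) ∈ ((r' : ℝ) - 1) • P ∧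
            (fun x => ((s x - m i₂ x : ℤ) : ℝ)) ∈ ((r' : ℝ) - 1) • P ∧
            (m i₁ = m i₂ ∨
              (fun x => ((s x - m i₁ x - m i₂ x : ℤ) : ℝ)) ∈ ((r' : ℝ) - 2) • P)) i j := by
  classical
  have hconv : Convex ℝ P := hlat ▸ convex_convexHull ℝ _
  have hpts : ∀ t, castFun (m t) ∈ P := fun t => (henum (m t)).mpr ⟨t, rfl⟩
  constructor
  · intro hgen r' hrr' s hs i j hdi hdj
    have hgen' : toricIdeal m
        = Ideal.span {p : MvPolynomial (Fin k) ℂ | p ∈ toricIdeal m ∧ p.totalDegree ≤ r} :=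
      hgen
    have hPne : P.Nonempty := ⟨castFun (m i), hpts i⟩
    have hr1 : 1 ≤ r' := by omega
    have hcast1 : ((r'-1:ℕ):ℝ) = (r':ℝ) - 1 := by rw [Nat.cast_sub hr1]; norm_num
    have hzi : castFun (fun x => s x - m i x) ∈ ((r' - 1 : ℕ) : ℝ) • P := by
      rw [hcast1]; exact hdi
    have hzj : castFun (fun x => s x - m j x) ∈ ((r' - 1 : ℕ) : ℝ) • P := by
      rw [hcast1]; exact hdj
    obtain ⟨u₁, hu₁d, hu₁f⟩ := exists_factorization henum hnorm hPne (r'-1) _ hzi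
    obtain ⟨v₁, hv₁d, hv₁f⟩ := exists_factorization henum hnorm hPne (r'-1) _ hzj
    set u := Finsupp.single i 1 + u₁ with hudef
    set v := Finsupp.single j 1 + v₁ with hvdef
    have hui : i ∈ u.support := by
      rw [Finsupp.mem_support_iff, hudef, Finsupp.add_apply, Finsupp.single_eq_same]
      omega
    have hvj : j ∈ v.support := by
      rw [Finsupp.mem_support_iff, hvdef, Finsupp.add_apply, Finsupp.single_eq_same]
      omega
    have hud : deg u = r' := by
      rw [hudef, deg_add, deg, Finsupp.sum_single_index rfl]
      omega
    have hvd : deg v = r' := by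
      rw [hvdef, deg_add, deg, Finsupp.sum_single_index rfl]
      omega
    have huf : (Avec m u).1 = s := by
      rw [hudef, Avec_add, Avec_single, one_smul]
      funext x
      have h3 := congrFun hu₁f x
      simp only [Prod.fst_add, Pi.add_apply]
      omega
    have hvf : (Avec m v).1 = s := by
      rw [hvdef, Avec_add, Avec_single, one_smul]
      funext x
      have h3 := congrFun hv₁f x
      simp only [Prod.fst_add, Pi.add_apply]
      omega
    have hA : Avec m u = Avec m v :=
      Prod.ext (huf.trans hvf.symm) (by rw [Avec_snd, Avec_snd, hud, hvd])
    have hrt : Relation.ReflTransGen (Mv m r) v u := RT_Mv_of_gen hgen' hA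
    have hstep : ∀ w : Fin k →₀ ℕ, (Avec m w).1 = s → deg w = r' →
        ∀ a ∈ w.support, ∀ b ∈ w.support,
        ((fun x => ((s x - m a x : ℤ) : ℝ)) ∈ ((r' : ℝ) - 1) • P ∧
         (fun x => ((s x - m b x : ℤ) : ℝ)) ∈ ((r' : ℝ) - 1) • P ∧
         (m a = m b ∨ (fun x => ((s x - m a x - m b x : ℤ) : ℝ)) ∈ ((r' : ℝ) - 2) • P)) := by
      intro w hwf hwd a haw b hbw
      refine ⟨mem_one hconv hpts hwd hr1 hwf haw, mem_one hconv hpts hwd hr1 hwf hbw, ?_⟩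
      rcases eq_or_ne a b with rfl | hab
      · exact Or.inl rfl
      · exact Or.inr (mem_two hconv hpts hwd hwf haw hbw hab)
    have htrans : ∀ v' u' : Fin k →₀ ℕ, Relation.ReflTransGen (Mv m r) v' u' →
        (Avec m v').1 = s → deg v' = r' → ∀ a ∈ v'.support, ∀ b ∈ u'.support,
        Relation.ReflTransGen (fun i₁ i₂ : Fin k =>
            (fun x => ((s x - m i₁ x : ℤ) : ℝ)) ∈ ((r' : ℝ) - 1) • P ∧
            (fun x => ((s x - m i₂ x : ℤ) : ℝ)) ∈ ((r' : ℝ) - 1) • P ∧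
            (m i₁ = m i₂ ∨
              (fun x => ((s x - m i₁ x - m i₂ x : ℤ) : ℝ)) ∈ ((r' : ℝ) - 2) • P)) a b := by
      intro v' u' hrt2
      induction hrt2 with
      | refl =>
          intro hf hd a ha b hb
          exact Relation.ReflTransGen.single (hstep v' hf hd a ha b hb)
      | @tail w' v'' hrt3 hmv ih =>
          intro hf hd a ha b hb
          have hAw' : Avec m w' = Avec m v' := (Avec_eq_of_RT hrt3).symm
          have hAv'' : Avec m v'' = Avec m v' := (Avec_eq_of_Mv hmv).symm.trans hAw'
          have hfw' : (Avec m w').1 = s := by rw [hAw', hf]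
          have hdw' : deg w' = r' := by rw [deg_eq_of_Avec_eq hAw', hd]
          have hfv'' : (Avec m v'').1 = s := by rw [hAv'', hf]
          have hdv'' : deg v'' = r' := by rw [deg_eq_of_Avec_eq hAv'', hd]
          obtain ⟨c, x, y, hw'eq, hv''eq, hAxy, hdx⟩ := hmv
          have hdc : 1 ≤ deg c := by
            have h5 : deg w' = deg c + deg x := by rw [hw'eq, deg_add]
            omega
          obtain ⟨t, htc⟩ := exists_mem_support_of_deg_pos hdc
          have htc1 : 1 ≤ c t := by
            have := Finsupp.mem_support_iff.mp htc
            omega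
          have htw' : t ∈ w'.support := by
            rw [Finsupp.mem_support_iff, hw'eq, Finsupp.add_apply]
            omega
          have htv'' : t ∈ v''.support := by
            rw [Finsupp.mem_support_iff, hv''eq, Finsupp.add_apply]
            omega
          exact Relation.ReflTransGen.tail (ih hf hd a ha t htw')
            (hstep v'' hfv'' hdv'' t htv'' b hb)
    have hRsymm : Symmetric (fun i₁ i₂ : Fin k =>
            (fun x => ((s x - m i₁ x : ℤ) : ℝ)) ∈ ((r' : ℝ) - 1) • P ∧
            (fun x => ((s x - m i₂ x : ℤ) : ℝ)) ∈ ((r' : ℝ) - 1) • P ∧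
            (m i₁ = m i₂ ∨
              (fun x => ((s x - m i₁ x - m i₂ x : ℤ) : ℝ)) ∈ ((r' : ℝ) - 2) • P)) := by
      rintro a b ⟨h1, h2, h3⟩
      refine ⟨h2, h1, ?_⟩
      rcases h3 with heq | hm
      · exact Or.inl heq.symm
      · refine Or.inr ?_
        have heq2 : (fun x => ((s x - m b x - m a x : ℤ) : ℝ))
            = (fun x => ((s x - m a x - m b x : ℤ) : ℝ)) := by
          funext x
          push_cast
          ring
        rw [heq2]
        exact hm
    haveI := Std.Symm.mk (α := Fin k) (fun a b => @hRsymm a b)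
    exact Std.Symm.symm (r := Relation.ReflTransGen _) _ _ (htrans v u hrt hvf hvd j hvj i hui)
  · intro hRHS
    show toricIdeal m
      = Ideal.span {p : MvPolynomial (Fin k) ℂ | p ∈ toricIdeal m ∧ p.totalDegree ≤ r}
    refine le_antisymm ?_ (Ideal.span_le.mpr fun p hp => hp.1)
    intro p hp
    exact mem_of_binomials (fun q hq u v hu hv hA =>
      binomial_mem_span hconv hpts hinj henum hnorm r hRHS (deg u) u v rfl hA) hp
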